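/- In the algebra of noncommutative symmetric functions, for any two compositions I and J, the product (sum over K ≤_{P} I of R_K) times (sum over L ≤_{P} J of R_L) equals sum over M ≤_{P} I.J of R_M, where ≤_{P} denotes the N-th order peak order on compositions. In other words, Sigma_I^{(N)} * Sigma_J^{(N)} = Sigma_{I.J}^{(N)}. -/

import Mathlib

open scoped Classical

noncomputable section

/-- The algebra of noncommutative symmetric functions, realized as the free
associative algebra over `ℂ` on generators `S_1, S_2, …` (indexed by `ℕ`,
the index `0` being unused). -/
abbrev NSym : Type := FreeAlgebra ℂ ℕ

/-- The complete noncommutative symmetric function `S_n`, with `S_0 = 1`. -/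
def Sg (n : ℕ) : NSym := if n = 0 then 1 else FreeAlgebra.ι ℂ n

/-- `S^I = S_{i_1} ⋯ S_{i_r}` for a composition `I` (a list of parts). -/
def SWord (I : List ℕ) : NSym := (I.map Sg).prod

/-- The list of all coarsenings of a composition (obtained by merging
adjacent blocks). -/
def coarse : List ℕ → List (List ℕ)
  | [] => [[]]
  | [a] => [[a]]
  | a :: b :: l => ((coarse (b :: l)).map (fun K => a :: K)) ++ coarse ((a + b) :: l)
termination_by l => l.length
decreasing_by all_goals simp

/-- The noncommutative ribbon Schur function
`R_I = ∑_{J ⪯ I} (-1)^{ℓ(I) - ℓ(J)} S^J`, the sum ranging over all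
coarsenings `J` of `I`. -/
def Rib (I : List ℕ) : NSym :=
  ((coarse I).map (fun J => ((-1 : ℂ) ^ (I.length - J.length)) • SWord J)).sum

/-- One elementary step of the order `≤_{P^{(N)}}`: replace one part `m + k`
by the pair `(m, k)` with `m ∈ [1, N-1]` and `k ≥ 1`. -/
def splitStep (N : ℕ) (I J : List ℕ) : Prop :=
  ∃ (L R : List ℕ) (m k : ℕ), 1 ≤ m ∧ m ≤ N - 1 ∧ 1 ≤ k ∧
    I = L ++ (m + k) :: R ∧ J = L ++ m :: k :: R

/-- `peakLE N J I` means `J ≤_{P^{(N)}} I`, i.e. `I` can be obtained from `J`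
by successively splitting parts `i` into `(m, i - m)` with `m ∈ [1, N-1]`. -/
def peakLE (N : ℕ) (J I : List ℕ) : Prop :=
  Relation.ReflTransGen (splitStep N) J I

/-- The complete peak function of order `N`:
`Σ^{(N)}_I = ∑_{J ≤_{P^{(N)}} I} R_J`. (Every `J ≤_{P^{(N)}} I` is a
coarsening of `I`, so the sum may be taken over coarsenings of `I`.) -/
def SigmaP (N : ℕ) (I : List ℕ) : NSym :=
  ((coarse I).map (fun J => if peakLE N J I then Rib J else 0)).sum

/-- Membership in `G^{(N)}`: all parts lie in `[1, N]` and the last part lies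
in `[1, N-1]`. -/
def memG (N : ℕ) (I : List ℕ) : Prop :=
  (∀ p ∈ I, 1 ≤ p ∧ p ≤ N) ∧ (∀ p, I.getLast? = some p → p ≤ N - 1)

end

noncomputable section Aux

/-- add `a` to the head of a list (or create `[a]`). -/
def addHead (a : ℕ) : List ℕ → List ℕ
  | [] => [a]
  | x :: X => (a + x) :: X

@[simp] lemma addHead_cons (a x : ℕ) (X : List ℕ) : addHead a (x :: X) = (a + x) :: X := rfl

lemma addHead_length {a : ℕ} {K : List ℕ} (hK : K ≠ []) : (addHead a K).length = K.length := by
  cases K with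
  | nil => exact absurd rfl hK
  | cons x X => rfl

lemma coarse_addHead (a : ℕ) : ∀ (l : List ℕ) (b : ℕ),
    (coarse (b :: l)).map (addHead a) = coarse ((a + b) :: l)
  | [], b => by rw [coarse, coarse]; simp [addHead]
  | d :: l', b => by
    rw [coarse, coarse]
    rw [List.map_append, List.map_map]
    congr 1
    rw [coarse_addHead a l' (b + d), Nat.add_assoc]

lemma coarse_cons (a : ℕ) {M : List ℕ} (hM : M ≠ []) :
    coarse (a :: M) = (coarse M).map (a :: ·) ++ (coarse M).map (addHead a) := by
  obtain ⟨b, l, rfl⟩ := List.exists_cons_of_ne_nil hM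
  rw [coarse, coarse_addHead]

lemma coarse_facts : ∀ (M : List ℕ), ∀ K ∈ coarse M,
    K.length ≤ M.length ∧ (M ≠ [] → K ≠ []) ∧ ((∀ x ∈ M, 1 ≤ x) → ∀ x ∈ K, 1 ≤ x)
  | [] => by rw [coarse]; intro K hK; simp at hK; subst hK; simp
  | [a] => by rw [coarse]; intro K hK; simp at hK; subst hK; simp
  | a :: b :: l => by
    rw [coarse]
    intro K hK
    rcases List.mem_append.1 hK with h | h
    · obtain ⟨K', hK', rfl⟩ := List.mem_map.1 h
      obtain ⟨h1, h2, h3⟩ := coarse_facts (b :: l) K' hK'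
      refine ⟨by simpa using Nat.succ_le_succ h1, fun _ => by simp, ?_⟩
      intro hpos x hx
      rcases List.mem_cons.1 hx with rfl | hx
      · exact hpos x (by simp)
      · exact h3 (fun y hy => hpos y (by simp [hy]) ) x hx
    · obtain ⟨h1, h2, h3⟩ := coarse_facts ((a + b) :: l) K h
      refine ⟨by simpa using Nat.le_succ_of_le h1, fun _ => h2 (by simp), ?_⟩
      intro hpos x hx
      apply h3 ?_ x hx
      intro y hy
      rcases List.mem_cons.1 hy with rfl | hy
      · have := hpos a (by simp); omega
      · exact hpos y (by simp [hy])
termination_by M => M.length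
decreasing_by all_goals simp

end Aux

section PeakAux

lemma splitStep_cons {N a : ℕ} {X Y : List ℕ} (h : splitStep N X Y) :
    splitStep N (a :: X) (a :: Y) := by
  obtain ⟨L, R, m, k, h1, h2, h3, rfl, rfl⟩ := h
  exact ⟨a :: L, R, m, k, h1, h2, h3, rfl, rfl⟩

lemma peakLE_cons {N a : ℕ} {X Y : List ℕ} (h : peakLE N X Y) : peakLE N (a :: X) (a :: Y) :=
  Relation.ReflTransGen.lift (fun Z => a :: Z) (fun _ _ hs => splitStep_cons hs) _ _ h

lemma splitStep_head {N : ℕ} {X Y : List ℕ} (h : splitStep N X Y) {x : ℕ}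
    (hx : X.head? = some x) : ∃ y, Y.head? = some y ∧ y ≤ x := by
  obtain ⟨L, R, m, k, h1, h2, h3, rfl, rfl⟩ := h
  cases L with
  | nil =>
    simp only [List.nil_append, List.head?_cons, Option.some.injEq] at hx ⊢
    exact ⟨m, rfl, by omega⟩
  | cons c L' =>
    simp only [List.cons_append, List.head?_cons, Option.some.injEq] at hx ⊢
    exact ⟨c, rfl, by omega⟩

lemma peakLE_head {N : ℕ} {X Z : List ℕ} (h : Relation.ReflTransGen (splitStep N) X Z) :
    ∀ {x : ℕ}, X.head? = some x → ∃ z, Z.head? = some z ∧ z ≤ x := by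
  induction h using Relation.ReflTransGen.head_induction_on with
  | refl => exact fun hx => ⟨_, hx, le_refl _⟩
  | head h' hch ih =>
    intro x hx
    obtain ⟨y, hy, hyx⟩ := splitStep_head h' hx
    obtain ⟨z, hz, hzy⟩ := ih hy
    exact ⟨z, hz, hzy.trans hyx⟩

lemma peakLE_cons_cancel {N a : ℕ} {M : List ℕ} :
    ∀ {X : List ℕ}, Relation.ReflTransGen (splitStep N) X (a :: M) →
      ∀ {K : List ℕ}, X = a :: K → Relation.ReflTransGen (splitStep N) K M := by
  intro X h
  induction h using Relation.ReflTransGen.head_induction_on with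
  | refl =>
    intro K hK
    cases hK
    exact Relation.ReflTransGen.refl
  | head h' hch ih =>
    intro K hK
    obtain ⟨L, R, m, k, h1, h2, h3, hX, hY⟩ := h'
    cases L with
    | nil =>
      exfalso
      simp only [List.nil_append] at hX hY
      rw [hK] at hX
      have ha : a = m + k := (List.cons.injEq .. ▸ hX).1
      obtain ⟨z, hz, hle⟩ := peakLE_head (hY ▸ hch) (show (m :: k :: R).head? = some m from rfl)
      simp only [List.head?_cons, Option.some.injEq] at hz
      omega
    | cons c L' =>
      simp only [List.cons_append] at hX hY
      rw [hK] at hX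
      have hac : a = c := (List.cons.injEq .. ▸ hX).1
      have hK2 : K = L' ++ (m + k) :: R := (List.cons.injEq .. ▸ hX).2
      have hstep : splitStep N K (L' ++ m :: k :: R) :=
        ⟨L', R, m, k, h1, h2, h3, hK2, rfl⟩
      exact Relation.ReflTransGen.head hstep (ih (by rw [hY, hac]))

lemma peakLE_head_split {N a : ℕ} {M : List ℕ} :
    ∀ {X : List ℕ}, Relation.ReflTransGen (splitStep N) X (a :: M) →
      ∀ {h : ℕ} {K : List ℕ}, X = h :: K → a < h →
      a ≤ N - 1 ∧ Relation.ReflTransGen (splitStep N) ((h - a) :: K) M := by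
  intro X hch
  induction hch using Relation.ReflTransGen.head_induction_on with
  | refl =>
    intro h K hX hlt
    have : a = h := (List.cons.injEq .. ▸ hX).1
    omega
  | head h' hch ih =>
    intro h K hX hlt
    obtain ⟨L, R, m, k, h1, h2, h3, hX2, hY⟩ := h'
    cases L with
    | nil =>
      simp only [List.nil_append] at hX2 hY
      rw [hX] at hX2
      have hh : h = m + k := (List.cons.injEq .. ▸ hX2).1
      have hKR : K = R := (List.cons.injEq .. ▸ hX2).2
      subst hKR
      rcases lt_trichotomy a m with hc | hc | hc
      · obtain ⟨hN1, hrest⟩ := ih (by rw [hY]) hc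
        refine ⟨hN1, Relation.ReflTransGen.head ?_ hrest⟩
        refine ⟨[], K, m - a, k, by omega, by omega, h3, ?_, by simp⟩
        simp only [List.nil_append]
        rw [show m - a + k = h - a by omega]
      · subst hc
        refine ⟨h2, ?_⟩
        have := peakLE_cons_cancel (hY ▸ hch) (rfl : (a :: (k :: K) : List ℕ) = a :: (k :: K))
        rw [show h - a = k by omega]
        exact this
      · exfalso
        obtain ⟨z, hz, hle⟩ := peakLE_head (hY ▸ hch) (show (m :: k :: K).head? = some m from rfl)
        simp only [List.head?_cons, Option.some.injEq] at hz
        omega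
    | cons c L' =>
      simp only [List.cons_append] at hX2 hY
      rw [hX] at hX2
      have hhc : h = c := (List.cons.injEq .. ▸ hX2).1
      have hK2 : K = L' ++ (m + k) :: R := (List.cons.injEq .. ▸ hX2).2
      obtain ⟨hN1, hrest⟩ := ih (by rw [hY, hhc]) hlt
      refine ⟨hN1, Relation.ReflTransGen.head ?_ hrest⟩
      exact ⟨(h - a) :: L', R, m, k, h1, h2, h3, by rw [hK2]; rfl, rfl⟩

lemma peakLE_cons_iff {N a : ℕ} {K M : List ℕ} :
    peakLE N (a :: K) (a :: M) ↔ peakLE N K M :=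
  ⟨fun h => peakLE_cons_cancel h rfl, fun h => peakLE_cons h⟩

lemma peakLE_addHead_iff {N a k : ℕ} {K M : List ℕ} (ha : 1 ≤ a) (hk : 1 ≤ k) :
    peakLE N ((a + k) :: K) (a :: M) ↔ (a ≤ N - 1 ∧ peakLE N (k :: K) M) := by
  constructor
  · intro h
    have := peakLE_head_split h rfl (by omega : a < a + k)
    rwa [show a + k - a = k by omega] at this
  · rintro ⟨h1, h2⟩
    exact Relation.ReflTransGen.head ⟨[], K, a, k, ha, h1, hk, rfl, rfl⟩ (peakLE_cons h2)

end PeakAux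

noncomputable section AlgAux

lemma sum_map_neg {α : Type*} (l : List α) (f : α → NSym) :
    (l.map (fun x => - f x)).sum = - (l.map f).sum := by
  induction l with
  | nil => simp
  | cons a l ih => simp only [List.map_cons, List.sum_cons, ih]; abel

lemma sum_map_sub {α : Type*} (l : List α) (f g : α → NSym) :
    (l.map (fun x => f x - g x)).sum = (l.map f).sum - (l.map g).sum := by
  induction l with
  | nil => simp
  | cons a l ih => simp only [List.map_cons, List.sum_cons, ih]; abel

@[simp] lemma SWord_nil : SWord [] = 1 := rfl

lemma SWord_cons (a : ℕ) (M : List ℕ) : SWord (a :: M) = Sg a * SWord M := by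
  simp [SWord]

lemma Rib_nil : Rib [] = 1 := by
  rw [Rib, coarse]; simp

lemma Rib_single (a : ℕ) : Rib [a] = Sg a := by
  rw [Rib, coarse]; simp [SWord]

lemma Rib_cons (a : ℕ) {M : List ℕ} (hM : M ≠ []) :
    Rib (a :: M) = Sg a * Rib M - Rib (addHead a M) := by
  obtain ⟨b, l, rfl⟩ := List.exists_cons_of_ne_nil hM
  rw [Rib, coarse_cons a (by simp), List.map_append, List.sum_append, List.map_map, List.map_map]
  have h1 : ((coarse (b :: l)).map
      ((fun J => ((-1 : ℂ) ^ ((a :: b :: l).length - J.length)) • SWord J) ∘ (a :: ·))).sum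
      = Sg a * Rib (b :: l) := by
    rw [Rib, ← List.sum_map_mul_left]
    apply congrArg
    apply List.map_congr_left
    intro K hK
    simp only [Function.comp_apply, List.length_cons, SWord_cons]
    rw [Nat.succ_sub_succ, mul_smul_comm]
  have h2 : ((coarse (b :: l)).map
      ((fun J => ((-1 : ℂ) ^ ((a :: b :: l).length - J.length)) • SWord J) ∘ addHead a)).sum
      = - Rib (addHead a (b :: l)) := by
    rw [show addHead a (b :: l) = (a + b) :: l from rfl, Rib, ← coarse_addHead, List.map_map,
      ← sum_map_neg]
    apply congrArg
    apply List.map_congr_left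
    intro K hK
    obtain ⟨hlen, hne, -⟩ := coarse_facts (b :: l) K hK
    simp only [Function.comp_apply, List.length_cons]
    rw [addHead_length (hne (by simp))]
    have hx : l.length + 1 + 1 - K.length = (l.length + 1 - K.length) + 1 := by
      simp only [List.length_cons] at hlen; omega
    rw [hx, pow_succ]
    simp
  rw [h1, h2, sub_eq_add_neg]

end AlgAux

noncomputable section MainAux

/-- The auxiliary "glued" peak sum. -/
def Gl (N c : ℕ) (M : List ℕ) : NSym :=
  ((coarse M).map (fun K => if peakLE N K M then Rib (addHead c K) else 0)).sum

lemma sum_coarse_cons (N : ℕ) (F : List ℕ → NSym) {a : ℕ} (ha : 1 ≤ a)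
    {M : List ℕ} (hM : M ≠ []) (hpos : ∀ x ∈ M, 1 ≤ x) :
    ((coarse (a :: M)).map (fun K => if peakLE N K (a :: M) then F K else 0)).sum
      = ((coarse M).map (fun K => if peakLE N K M then F (a :: K) else 0)).sum
        + (if a ≤ N - 1 then
            ((coarse M).map (fun K => if peakLE N K M then F (addHead a K) else 0)).sum
          else 0) := by
  rw [coarse_cons a hM, List.map_append, List.sum_append, List.map_map, List.map_map]
  congr 1
  · apply congrArg
    apply List.map_congr_left
    intro K hK
    simp only [Function.comp_apply]
    exact if_congr peakLE_cons_iff rfl rfl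
  · by_cases hle : a ≤ N - 1
    · rw [if_pos hle]
      apply congrArg
      apply List.map_congr_left
      intro K hK
      obtain ⟨hlen, hne, hp⟩ := coarse_facts M K hK
      obtain ⟨k, K₂, rfl⟩ := List.exists_cons_of_ne_nil (hne hM)
      have hk : 1 ≤ k := hp hpos k (by simp)
      simp only [Function.comp_apply, addHead_cons]
      simp only [peakLE_addHead_iff ha hk]
      by_cases hP : peakLE N (k :: K₂) M <;> simp [hP, hle]
    · rw [if_neg hle]
      apply List.sum_eq_zero
      intro x hx
      obtain ⟨K, hK, rfl⟩ := List.mem_map.1 hx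
      obtain ⟨hlen, hne, hp⟩ := coarse_facts M K hK
      obtain ⟨k, K₂, rfl⟩ := List.exists_cons_of_ne_nil (hne hM)
      have hk : 1 ≤ k := hp hpos k (by simp)
      simp only [Function.comp_apply, addHead_cons]
      simp only [peakLE_addHead_iff ha hk]; rw [if_neg (by tauto)]

lemma SigmaP_cons_core (N : ℕ) {a : ℕ} (ha : 1 ≤ a) {M : List ℕ} (hM : M ≠ [])
    (hpos : ∀ x ∈ M, 1 ≤ x) :
    SigmaP N (a :: M)
      = (Sg a * SigmaP N M - Gl N a M) + (if a ≤ N - 1 then Gl N a M else 0) := by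
  rw [SigmaP, sum_coarse_cons N Rib ha hM hpos]
  congr 1
  have hcongr : ∀ K ∈ coarse M,
      (if peakLE N K M then Rib (a :: K) else 0)
        = (fun K => (if peakLE N K M then Sg a * Rib K else 0)
            - (if peakLE N K M then Rib (addHead a K) else 0)) K := by
    intro K hK
    have hne := (coarse_facts M K hK).2.1 hM
    rw [Rib_cons a hne]
    by_cases hP : peakLE N K M <;> simp [hP]
  rw [List.map_congr_left hcongr, sum_map_sub]
  congr 1
  · have : ∀ K ∈ coarse M,
        (if peakLE N K M then Sg a * Rib K else 0)
          = (fun K => Sg a * (if peakLE N K M then Rib K else 0)) K := by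
      intro K _
      by_cases hP : peakLE N K M <;> simp [hP]
    rw [List.map_congr_left this, List.sum_map_mul_left]
    rfl

lemma SigmaP_cons_le (N : ℕ) {a : ℕ} (ha : 1 ≤ a) (haN : a ≤ N - 1) {M : List ℕ}
    (hM : M ≠ []) (hpos : ∀ x ∈ M, 1 ≤ x) :
    SigmaP N (a :: M) = Sg a * SigmaP N M := by
  rw [SigmaP_cons_core N ha hM hpos, if_pos haN]
  abel

lemma SigmaP_cons_gt (N : ℕ) {a : ℕ} (ha : 1 ≤ a) (haN : ¬ a ≤ N - 1) {M : List ℕ}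
    (hM : M ≠ []) (hpos : ∀ x ∈ M, 1 ≤ x) :
    SigmaP N (a :: M) = Sg a * SigmaP N M - Gl N a M := by
  rw [SigmaP_cons_core N ha hM hpos, if_neg haN, add_zero]

lemma Gl_cons_core (N c : ℕ) {a : ℕ} (ha : 1 ≤ a) {M : List ℕ} (hM : M ≠ [])
    (hpos : ∀ x ∈ M, 1 ≤ x) :
    Gl N c (a :: M)
      = (Sg (c + a) * SigmaP N M - Gl N (c + a) M)
        + (if a ≤ N - 1 then Gl N (c + a) M else 0) := by
  rw [Gl, sum_coarse_cons N (fun K => Rib (addHead c K)) ha hM hpos]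
  congr 1
  · -- first sum : addHead c (a :: K) = (c+a) :: K
    have hcongr : ∀ K ∈ coarse M,
        (if peakLE N K M then Rib (addHead c (a :: K)) else 0)
          = (fun K => (if peakLE N K M then Sg (c + a) * Rib K else 0)
              - (if peakLE N K M then Rib (addHead (c + a) K) else 0)) K := by
      intro K hK
      have hne := (coarse_facts M K hK).2.1 hM
      rw [addHead_cons, Rib_cons (c + a) hne]
      by_cases hP : peakLE N K M <;> simp [hP]
    rw [List.map_congr_left hcongr, sum_map_sub]
    congr 1
    have : ∀ K ∈ coarse M,
        (if peakLE N K M then Sg (c + a) * Rib K else 0)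
          = (fun K => Sg (c + a) * (if peakLE N K M then Rib K else 0)) K := by
      intro K _
      by_cases hP : peakLE N K M <;> simp [hP]
    rw [List.map_congr_left this, List.sum_map_mul_left]
    rfl
  · by_cases hle : a ≤ N - 1
    · rw [if_pos hle, if_pos hle]
      apply congrArg
      apply List.map_congr_left
      intro K hK
      have hne := (coarse_facts M K hK).2.1 hM
      obtain ⟨k, K₂, rfl⟩ := List.exists_cons_of_ne_nil hne
      simp only [addHead_cons, ← Nat.add_assoc]
    · rw [if_neg hle, if_neg hle]

lemma Gl_cons_le (N c : ℕ) {a : ℕ} (ha : 1 ≤ a) (haN : a ≤ N - 1) {M : List ℕ}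
    (hM : M ≠ []) (hpos : ∀ x ∈ M, 1 ≤ x) :
    Gl N c (a :: M) = Sg (c + a) * SigmaP N M := by
  rw [Gl_cons_core N c ha hM hpos, if_pos haN]
  abel

lemma Gl_cons_gt (N c : ℕ) {a : ℕ} (ha : 1 ≤ a) (haN : ¬ a ≤ N - 1) {M : List ℕ}
    (hM : M ≠ []) (hpos : ∀ x ∈ M, 1 ≤ x) :
    Gl N c (a :: M) = Sg (c + a) * SigmaP N M - Gl N (c + a) M := by
  rw [Gl_cons_core N c ha hM hpos, if_neg haN, add_zero]

lemma peakLE_refl (N : ℕ) (K : List ℕ) : peakLE N K K := Relation.ReflTransGen.refl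

lemma SigmaP_nil (N : ℕ) : SigmaP N [] = 1 := by
  rw [SigmaP, coarse]
  simp only [List.map_cons, List.map_nil, List.sum_cons, List.sum_nil, add_zero]
  rw [if_pos (peakLE_refl N [])]
  exact Rib_nil

lemma SigmaP_single (N a : ℕ) : SigmaP N [a] = Sg a := by
  rw [SigmaP, coarse]
  simp only [List.map_cons, List.map_nil, List.sum_cons, List.sum_nil, add_zero]
  rw [if_pos (peakLE_refl N [a])]
  exact Rib_single a

lemma Gl_single (N c a : ℕ) : Gl N c [a] = Sg (c + a) := by
  rw [Gl, coarse]
  simp only [List.map_cons, List.map_nil, List.sum_cons, List.sum_nil, add_zero]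
  rw [if_pos (peakLE_refl N [a])]
  exact Rib_single (c + a)

lemma main_ind (N : ℕ) : ∀ (I : List ℕ), I ≠ [] → (∀ x ∈ I, 1 ≤ x) →
    (∀ p, I.getLast? = some p → p ≤ N - 1) →
    ∀ (J : List ℕ), J ≠ [] → (∀ x ∈ J, 1 ≤ x) →
    SigmaP N (I ++ J) = SigmaP N I * SigmaP N J ∧
      ∀ c, Gl N c (I ++ J) = Gl N c I * SigmaP N J := by
  intro I
  induction I with
  | nil => intro h; exact absurd rfl h
  | cons a I' ih =>
    intro _ hpos hlast J hJ hJpos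
    have ha : 1 ≤ a := hpos a (by simp)
    cases I' with
    | nil =>
      have haN : a ≤ N - 1 := hlast a (by simp)
      constructor
      · rw [List.cons_append, List.nil_append, SigmaP_cons_le N ha haN hJ hJpos,
          SigmaP_single]
      · intro c
        rw [List.cons_append, List.nil_append, Gl_cons_le N c ha haN hJ hJpos, Gl_single]
    | cons b I'' =>
      have hI' : (b :: I'' : List ℕ) ≠ [] := by simp
      have hpos' : ∀ x ∈ b :: I'', 1 ≤ x := fun x hx => hpos x (by simp [hx])
      have hlast' : ∀ p, (b :: I'').getLast? = some p → p ≤ N - 1 := by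
        intro p hp
        apply hlast
        rw [List.getLast?_cons_cons]
        exact hp
      obtain ⟨hA, hB⟩ := ih hI' hpos' hlast' J hJ hJpos
      have happ : (b :: I'') ++ J ≠ [] := by simp
      have happos : ∀ x ∈ (b :: I'') ++ J, 1 ≤ x := by
        intro x hx
        rcases List.mem_append.1 hx with hx | hx
        · exact hpos' x hx
        · exact hJpos x hx
      by_cases haN : a ≤ N - 1
      · constructor
        · rw [List.cons_append, SigmaP_cons_le N ha haN happ happos, hA,
            SigmaP_cons_le N ha haN hI' hpos', mul_assoc]
        · intro c
          rw [List.cons_append, Gl_cons_le N c ha haN happ happos, hA,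
            Gl_cons_le N c ha haN hI' hpos', mul_assoc]
      · constructor
        · rw [List.cons_append, SigmaP_cons_gt N ha haN happ happos, hA, hB a,
            SigmaP_cons_gt N ha haN hI' hpos', sub_mul, mul_assoc]
        · intro c
          rw [List.cons_append, Gl_cons_gt N c ha haN happ happos, hA, hB (c + a),
            Gl_cons_gt N c ha haN hI' hpos', sub_mul, mul_assoc]

end MainAux


/-- Multiplicativity of the complete peak functions of order `N`:
`Σ^{(N)}_I Σ^{(N)}_J = Σ^{(N)}_{I·J}` for compositions `I, J ∈ G^{(N)}`. -/
theorem sigmaP_mul (N : ℕ) (hN : 1 ≤ N) (I J : List ℕ)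
    (hI : memG N I) (hJ : memG N J) :
    SigmaP N I * SigmaP N J = SigmaP N (I ++ J) := by
  rcases eq_or_ne I [] with rfl | hI0
  · rw [SigmaP_nil, one_mul, List.nil_append]
  rcases eq_or_ne J [] with rfl | hJ0
  · rw [SigmaP_nil, mul_one, List.append_nil]
  exact (main_ind N I hI0 (fun x hx => (hI.1 x hx).1) hI.2 J hJ0
    (fun x hx => (hJ.1 x hx).1)).1.symm
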